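/- Let X be a finitely generated free abelian group (lattice) and σ an automorphism of X of finite order n. If σ permutes a basis of X, then Ker(1 + σ + σ² + ... + σ^{n-1}) = (σ - 1)X. -/

import Mathlib

private theorem aux_ker_norm_eq_range_sub_one
    {R : Type*} [CommRing R] [IsDomain R] [CharZero R]
    {X : Type*} [AddCommGroup X] [Module R X]
    (σ : X ≃ₗ[R] X) (n : ℕ) (hn : 0 < n) (hσn : σ ^ n = 1)
    {ι : Type*} [Fintype ι] (b : Module.Basis ι R X) (e : Equiv.Perm ι)
    (hperm : ∀ i, σ (b i) = b (e i)) :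
    LinearMap.ker (∑ i ∈ Finset.range n, ((σ ^ i : X ≃ₗ[R] X) : X →ₗ[R] X))
      = LinearMap.range ((σ : X →ₗ[R] X) - LinearMap.id) := by
  classical
  set N : X →ₗ[R] X := ∑ i ∈ Finset.range n, ((σ ^ i : X ≃ₗ[R] X) : X →ₗ[R] X) with hNdef
  have hA : ∀ (k : ℕ) (i : ι), (σ ^ k : X ≃ₗ[R] X) (b i) = b ((e ^ k) i) := by
    intro k
    induction k with
    | zero => intro i; simp
    | succ k ih =>
      intro i
      rw [pow_succ', pow_succ']
      show σ ((σ ^ k : X ≃ₗ[R] X) (b i)) = b (e ((e ^ k) i))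
      rw [ih, hperm]
  have hne : ∀ i, (e ^ n) i = i := by
    intro i
    apply b.injective
    rw [← hA, hσn]
    rfl
  have hnk : ∀ (m : ℕ) (i : ι), (e ^ (n * m)) i = i := by
    intro m
    induction m with
    | zero => intro i; simp
    | succ m ih =>
      intro i
      rw [Nat.mul_succ, pow_add]
      show (e ^ (n * m)) ((e ^ n) i) = i
      rw [hne, ih]
  set Rel : ι → ι → Prop := fun i j => ∃ k : ℕ, (e ^ k) i = j with hReldef
  have hrefl : ∀ i, Rel i i := fun i => ⟨0, rfl⟩
  have hsymm : ∀ i j, Rel i j → Rel j i := by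
    rintro i j ⟨k, rfl⟩
    refine ⟨n * k - k, ?_⟩
    have h1 : (e ^ (n * k - k)) ((e ^ k) i) = (e ^ (n * k)) i := by
      rw [← Equiv.Perm.mul_apply, ← pow_add, Nat.sub_add_cancel (Nat.le_mul_of_pos_left k hn)]
    rw [h1, hnk]
  have htrans : ∀ i j l, Rel i j → Rel j l → Rel i l := by
    rintro i j l ⟨k, rfl⟩ ⟨m, rfl⟩
    exact ⟨m + k, by rw [pow_add]; rfl⟩
  set st : Setoid ι :=
    ⟨Rel, ⟨hrefl, @fun i j h => hsymm i j h, @fun i j l h h' => htrans i j l h h'⟩⟩ with hstdef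
  set r : ι → ι := fun i => (Quotient.mk st i).out with hrdef
  have hrR : ∀ i, Rel (r i) i := fun i => Quotient.mk_out (s := st) i
  have hreq : ∀ i j, Rel i j → r i = r j := fun i j h =>
    congrArg Quotient.out (Quotient.sound (s := st) h)
  have hrr : ∀ i, r (r i) = r i := fun i => hreq _ _ (hrR i)
  have hmem : ∀ i j, Rel i j →
      b j - b i ∈ LinearMap.range ((σ : X →ₗ[R] X) - LinearMap.id) := by
    rintro i j ⟨k, rfl⟩
    refine ⟨∑ m ∈ Finset.range k, (σ ^ m : X ≃ₗ[R] X) (b i), ?_⟩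
    have key : (σ : X →ₗ[R] X) (∑ m ∈ Finset.range k, (σ ^ m : X ≃ₗ[R] X) (b i))
        - ∑ m ∈ Finset.range k, (σ ^ m : X ≃ₗ[R] X) (b i)
        = (σ ^ k : X ≃ₗ[R] X) (b i) - (σ ^ 0 : X ≃ₗ[R] X) (b i) := by
      rw [map_sum, ← Finset.sum_sub_distrib,
        ← Finset.sum_range_sub (fun m => (σ ^ m : X ≃ₗ[R] X) (b i)) k]
      refine Finset.sum_congr rfl fun m _ => ?_
      rw [pow_succ']
      rfl
    rw [LinearMap.sub_apply, LinearMap.id_apply, key, hA]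
    simp
  have hNsub : ∀ x : X, N ((σ : X →ₗ[R] X) x - x) = 0 := by
    intro x
    rw [hNdef]
    simp only [LinearMap.sum_apply, LinearEquiv.coe_coe, map_sub]
    rw [← Finset.sum_sub_distrib]
    have h1 : ∀ m ∈ Finset.range n,
        (σ ^ m : X ≃ₗ[R] X) (σ x) - (σ ^ m : X ≃ₗ[R] X) x
        = (σ ^ (m + 1) : X ≃ₗ[R] X) x - (σ ^ m : X ≃ₗ[R] X) x := by
      intro m _
      rw [pow_succ]
      rfl
    rw [Finset.sum_congr rfl h1,
      Finset.sum_range_sub (fun m => (σ ^ m : X ≃ₗ[R] X) x) n, hσn]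
    simp
  have hNb : ∀ m : ι, N (b m) = ∑ k ∈ Finset.range n, b ((e ^ k) m) := by
    intro m
    rw [hNdef]
    simp only [LinearMap.sum_apply, LinearEquiv.coe_coe]
    exact Finset.sum_congr rfl fun k _ => hA k m
  apply le_antisymm
  · intro x hx
    have hx0 : N x = 0 := hx
    set c : ι → R := fun i => b.repr x i with hcdef
    set y : X := ∑ i : ι, c i • (b i - b (r i)) with hydef
    have hy : y ∈ LinearMap.range ((σ : X →ₗ[R] X) - LinearMap.id) := by
      refine Submodule.sum_mem _ fun i _ => Submodule.smul_mem _ _ ?_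
      exact hmem (r i) i (hrR i)
    set z : X := ∑ i : ι, c i • b (r i) with hzdef
    have hxyz : x = y + z := by
      rw [hydef, hzdef, ← Finset.sum_add_distrib]
      conv_lhs => rw [← b.sum_repr x]
      refine Finset.sum_congr rfl fun i _ => ?_
      rw [smul_sub]
      abel
    have hNy : N y = 0 := by
      obtain ⟨w, hw⟩ := hy
      rw [← hw]
      simpa using hNsub w
    have hNz : N z = 0 := by
      have h2 := congrArg N hxyz
      rw [map_add, hNy, hx0, zero_add] at h2
      exact h2.symm
    have hreprz : ∀ j : ι, b.repr z j = ∑ i : ι, c i * (if r i = j then 1 else 0) := by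
      intro j
      rw [hzdef, map_sum, Finsupp.finset_sum_apply]
      refine Finset.sum_congr rfl fun i _ => ?_
      rw [map_smul, Finsupp.smul_apply, b.repr_self, Finsupp.single_apply, smul_eq_mul]
    have hreprNz : ∀ j : ι, b.repr (N z) j
        = ∑ i : ι, c i * (∑ k ∈ Finset.range n, if (e ^ k) (r i) = j then 1 else 0) := by
      intro j
      rw [hzdef, map_sum, map_sum, Finsupp.finset_sum_apply]
      refine Finset.sum_congr rfl fun i _ => ?_
      rw [map_smul, map_smul, Finsupp.smul_apply, hNb, map_sum, Finsupp.finset_sum_apply,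
        smul_eq_mul]
      congr 1
      refine Finset.sum_congr rfl fun k _ => ?_
      rw [b.repr_self, Finsupp.single_apply]
    set M : ι → R := fun j => ∑ k ∈ Finset.range n, if (e ^ k) j = j then 1 else 0 with hMdef
    have hMne : ∀ j, M j ≠ 0 := by
      intro j
      rw [hMdef]
      simp only [Finset.sum_boole]
      have hcard : 0 < ((Finset.range n).filter fun k => (e ^ k) j = j).card := by
        refine Finset.card_pos.mpr ⟨0, ?_⟩
        simp [Finset.mem_filter, Finset.mem_range, hn]
      exact_mod_cast Nat.cast_ne_zero.mpr hcard.ne'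
    have hcount : ∀ j, r j = j → ∀ i : ι,
        (∑ k ∈ Finset.range n, if (e ^ k) (r i) = j then (1 : R) else 0)
        = (if r i = j then (1 : R) else 0) * M j := by
      intro j hj i
      by_cases h : r i = j
      · rw [h, if_pos rfl, one_mul]
      · rw [if_neg h, zero_mul]
        refine Finset.sum_eq_zero fun k _ => ?_
        rw [if_neg]
        intro hk
        exact h (by rw [← hrr i, hreq (r i) j ⟨k, hk⟩, hj])
    have hz0 : ∀ j : ι, b.repr z j = 0 := by
      intro j
      by_cases hj : r j = j
      · have h1 : b.repr (N z) j = (b.repr z j) * M j := by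
          rw [hreprNz, hreprz, Finset.sum_mul]
          refine Finset.sum_congr rfl fun i _ => ?_
          rw [hcount j hj i, mul_assoc]
        rw [hNz] at h1
        simp only [map_zero, Finsupp.zero_apply] at h1
        rcases mul_eq_zero.mp h1.symm with h | h
        · exact h
        · exact absurd h (hMne j)
      · rw [hreprz]
        refine Finset.sum_eq_zero fun i _ => ?_
        rw [if_neg, mul_zero]
        intro h
        exact hj (by rw [← h, hrr])
    have hzz : z = 0 := by
      have h3 : b.repr z = 0 := Finsupp.ext hz0
      simpa using congrArg b.repr.symm h3
    rw [hxyz, hzz, add_zero]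
    exact hy
  · rintro x ⟨w, rfl⟩
    rw [LinearMap.mem_ker, LinearMap.sub_apply, LinearMap.id_apply]
    exact hNsub w



/-- Let `X` be a finitely generated free abelian group (lattice) and
`σ` an automorphism of `X` of finite order `n`.  If `σ` permutes a basis of `X`, then
`Ker (1 + σ + σ² + ⋯ + σ^{n-1}) = (σ - 1) X`. -/
theorem ker_norm_eq_range_sub_one_of_permutes_basis
    {X : Type*} [AddCommGroup X] [Module ℤ X] [Module.Free ℤ X] [Module.Finite ℤ X]
    (σ : X ≃ₗ[ℤ] X) (n : ℕ) (hn : 0 < n) (hord : orderOf σ = n)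
    {ι : Type*} (b : Module.Basis ι ℤ X) (e : Equiv.Perm ι)
    (hperm : ∀ i, σ (b i) = b (e i)) :
    LinearMap.ker (∑ i ∈ Finset.range n, ((σ ^ i : X ≃ₗ[ℤ] X) : X →ₗ[ℤ] X))
      = LinearMap.range ((σ : X →ₗ[ℤ] X) - LinearMap.id) := by
  have : Finite ι := Module.Finite.finite_basis b
  cases nonempty_fintype ι
  have hσn : σ ^ n = 1 := by rw [← hord]; exact pow_orderOf_eq_one σ
  exact aux_ker_norm_eq_range_sub_one σ n hn hσn b e hperm
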